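/- Let G be a real polynomial with only real zeros, with deg G ≥ 2, and let A, a₁, a₂ > 0. If complex numbers x₁, x₂ satisfy G(iA - ia₁ - ia₂) + G(iA - ia₁ + ia₂)x₂ + G(iA + ia₁ - ia₂)x₁ + G(iA + ia₁ + ia₂)x₁x₂ = 0 and |x₁| ≥ 1, then |x₂| < 1. -/

import Mathlib

open Complex Polynomial

namespace P2aux

noncomputable def om1 : ℂ := ⟨-1/2, Real.sqrt 3 / 2⟩
noncomputable def om2 : ℂ := ⟨-1/2, -(Real.sqrt 3 / 2)⟩

lemma om1_re : om1.re = -1/2 := rfl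
lemma om1_im : om1.im = Real.sqrt 3 / 2 := rfl
lemma om2_re : om2.re = -1/2 := rfl
lemma om2_im : om2.im = -(Real.sqrt 3 / 2) := rfl

lemma sqrt3_sq : Real.sqrt 3 * Real.sqrt 3 = 3 := Real.mul_self_sqrt (by norm_num)

lemma normSq_om1 : normSq om1 = 1 := by
  simp only [Complex.normSq_apply, om1_re, om1_im]
  nlinarith [sqrt3_sq]

lemma normSq_om2 : normSq om2 = 1 := by
  simp only [Complex.normSq_apply, om2_re, om2_im]
  nlinarith [sqrt3_sq]

lemma abs_om1 : ‖om1‖ = 1 := by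
  rw [Complex.norm_def, normSq_om1, Real.sqrt_one]

lemma abs_om2 : ‖om2‖ = 1 := by
  rw [Complex.norm_def, normSq_om2, Real.sqrt_one]

lemma om1_ne_neg_one : om1 ≠ -1 := by
  intro h
  have h2 := congrArg Complex.im h
  have h3 : 0 < Real.sqrt 3 := Real.sqrt_pos.mpr (by norm_num)
  simp only [om1_im, Complex.neg_im, Complex.one_im, neg_zero] at h2
  linarith

lemma om2_ne_neg_one : om2 ≠ -1 := by
  intro h
  have h2 := congrArg Complex.im h
  have h3 : 0 < Real.sqrt 3 := Real.sqrt_pos.mpr (by norm_num)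
  simp only [om2_im, Complex.neg_im, Complex.one_im, neg_zero] at h2
  linarith

lemma sum3 (x y : ℂ) :
    normSq (x + y * 1) + normSq (x + y * om1) + normSq (x + y * om2)
      = 3 * normSq x + 3 * normSq y := by
  simp only [Complex.normSq_apply, Complex.add_re, Complex.add_im, Complex.mul_re,
    Complex.mul_im, Complex.one_re, Complex.one_im, om1_re, om1_im, om2_re, om2_im]
  linear_combination ((y.re*y.re + y.im*y.im)/2) * sqrt3_sq

lemma affine_ne {a b : ℂ} (h : ‖b‖ < ‖a‖) :
    ∀ z : ℂ, ‖z‖ ≤ 1 → a + b * z ≠ 0 := by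
  intro z hz h0
  have ha : a = -(b*z) := by linear_combination h0
  have : ‖a‖ ≤ ‖b‖ := by
    rw [ha, norm_neg, norm_mul]
    calc ‖b‖ * ‖z‖ ≤ ‖b‖ * 1 :=
      mul_le_mul_of_nonneg_left hz (norm_nonneg _)
    _ = ‖b‖ := mul_one _
  linarith

lemma affine_full {a b : ℂ} (h : ∀ z : ℂ, ‖z‖ ≤ 1 → a + b * z ≠ 0) :
    ‖b‖ < ‖a‖ := by
  by_contra hc
  push_neg at hc
  rcases eq_or_ne b 0 with hb | hb
  · have ha : a ≠ 0 := by simpa using h 0 (by simp)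
    apply ha
    have h0 : ‖a‖ = 0 := le_antisymm (by simpa [hb] using hc)
      (norm_nonneg _)
    exact norm_eq_zero.mp h0
  · have hz : ‖(-(a/b))‖ ≤ 1 := by
      rw [norm_neg, norm_div]
      exact div_le_one_of_le₀ hc (norm_nonneg _)
    exact h _ hz (by field_simp; ring)

lemma affine_weak {a b : ℂ} (h : ∀ z : ℂ, ‖z‖ ≤ 1 → z ≠ -1 → a + b * z ≠ 0) :
    ‖b‖ ≤ ‖a‖ := by
  by_contra hc
  push_neg at hc
  have hb : b ≠ 0 := by
    intro h0; rw [h0] at hc; simp only [norm_zero] at hc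
    exact absurd (norm_nonneg a) (not_le.mpr hc)
  have hzlt : ‖(-(a/b))‖ < 1 := by
    rw [norm_neg, norm_div]
    exact (div_lt_one (lt_of_le_of_lt (norm_nonneg _) hc)).mpr hc
  have hne : -(a/b) ≠ -1 := by
    intro h1
    rw [h1] at hzlt
    simp at hzlt
  exact h _ (le_of_lt hzlt) hne (by field_simp; ring)

lemma nsq_le {x y : ℂ} (h : ‖x‖ ≤ ‖y‖) : normSq x ≤ normSq y := by
  rw [← Complex.sq_norm, ← Complex.sq_norm]
  exact pow_le_pow_left₀ (norm_nonneg _) h 2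

lemma nsq_lt {x y : ℂ} (h : ‖x‖ < ‖y‖) : normSq x < normSq y := by
  rw [← Complex.sq_norm, ← Complex.sq_norm]
  exact pow_lt_pow_left₀ h (norm_nonneg _) (by norm_num)

lemma CLemma {a b c d : ℂ}
    (h1 : ∀ w : ℂ, (w = 1 ∨ w = om1 ∨ w = om2) →
      ‖(b + d * w)‖ ≤ ‖(a + c * w)‖)
    (h2 : ∀ w : ℂ, (w = 1 ∨ w = om1 ∨ w = om2) →
      ‖(c + d * w)‖ < ‖(a + b * w)‖) :
    ‖d‖ < ‖a‖ := by
  have e1 := nsq_le (h1 1 (Or.inl rfl))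
  have e2 := nsq_le (h1 om1 (Or.inr (Or.inl rfl)))
  have e3 := nsq_le (h1 om2 (Or.inr (Or.inr rfl)))
  have f1 := nsq_lt (h2 1 (Or.inl rfl))
  have f2 := nsq_lt (h2 om1 (Or.inr (Or.inl rfl)))
  have f3 := nsq_lt (h2 om2 (Or.inr (Or.inr rfl)))
  have s1 := sum3 b d
  have s2 := sum3 a c
  have s3 := sum3 c d
  have s4 := sum3 a b
  have key : normSq d < normSq a := by linarith
  rw [← Complex.sq_norm, ← Complex.sq_norm] at key
  exact lt_of_pow_lt_pow_left₀ 2 (norm_nonneg _) key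

lemma mu_abs {w : ℂ} (hw : w = 1 ∨ w = om1 ∨ w = om2) : ‖w‖ ≤ 1 := by
  rcases hw with h | h | h <;> subst h
  · simp
  · exact le_of_eq abs_om1
  · exact le_of_eq abs_om2

lemma mu_ne {w : ℂ} (hw : w = 1 ∨ w = om1 ∨ w = om2) : w ≠ -1 := by
  rcases hw with h | h | h <;> subst h
  · intro h; have := congrArg Complex.re h; norm_num at this
  · exact om1_ne_neg_one
  · exact om2_ne_neg_one

def ClosedD (a b c d : ℂ) : Prop :=
  ∀ u v : ℂ, ‖u‖ ≤ 1 → ‖v‖ ≤ 1 → a + b * u + c * v + d * (u * v) ≠ 0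

def WeakD (a b c d : ℂ) : Prop :=
  ∀ u v : ℂ, ‖u‖ ≤ 1 → ‖v‖ ≤ 1 → ¬(u = -1 ∧ v = -1) →
    a + b * u + c * v + d * (u * v) ≠ 0

lemma weak_affine {a b c d : ℂ} (h : WeakD a b c d) {v : ℂ} (hv : ‖v‖ ≤ 1)
    (hv1 : v ≠ -1) : ∀ z : ℂ, ‖z‖ ≤ 1 → (a + c * v) + (b + d * v) * z ≠ 0 := by
  intro z hz h0
  exact h z v hz hv (fun hc => hv1 hc.2) (by linear_combination h0)

lemma closed_affine {a b c d : ℂ} (h : ClosedD a b c d) {v : ℂ} (hv : ‖v‖ ≤ 1) :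
    ∀ z : ℂ, ‖z‖ ≤ 1 → (a + c * v) + (b + d * v) * z ≠ 0 := by
  intro z hz h0
  exact h z v hz hv (by linear_combination h0)

lemma prod_affine {a1 b1 a2 b2 : ℂ}
    (h1 : ∀ z : ℂ, ‖z‖ ≤ 1 → a1 + b1 * z ≠ 0)
    (h2 : ∀ z : ℂ, ‖z‖ ≤ 1 → a2 + b2 * z ≠ 0) :
    ∀ u : ℂ, ‖u‖ ≤ 1 → a1 * a2 + b1 * b2 * u ≠ 0 := by
  have k1 := affine_full h1
  have k2 := affine_full h2
  have key : ‖(b1 * b2)‖ < ‖(a1 * a2)‖ := by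
    rw [norm_mul, norm_mul]
    exact mul_lt_mul'' k1 k2 (norm_nonneg _) (norm_nonneg _)
  exact affine_ne key

lemma combine {a b c d a' b' c' d' : ℂ} (hq : WeakD a b c d) (hQ : ClosedD a' b' c' d') :
    ClosedD (a * a') (b * b') (c * c') (d * d') := by
  intro u v hu hv
  have key : ‖(c * c' + d * d' * u)‖ < ‖(a * a' + b * b' * u)‖ := by
    apply CLemma (b := c * a' + d * b' * u) (c := a * c' + b * d' * u)
    · intro w hw
      apply affine_weak
      intro z hz hz1
      have hval := prod_affine (weak_affine hq hz hz1) (closed_affine hQ (mu_abs hw)) u hu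
      intro h0
      apply hval
      linear_combination h0
    · intro w hw
      apply affine_full
      intro z hz
      have hval := prod_affine (weak_affine hq (mu_abs hw) (mu_ne hw)) (closed_affine hQ hz) u hu
      intro h0
      apply hval
      linear_combination h0
  have := affine_ne key v hv
  intro h0
  apply this
  linear_combination h0

lemma pair_closed {a b c d a' b' c' d' e e' : ℂ}
    (hq : WeakD a b c d) (hq' : WeakD a' b' c' d')
    (hac : a - c = e) (hbd : b - d = e) (hac' : a' - c' = e') (hbd' : b' - d' = e')
    (he : e ≠ 0) (he' : e' ≠ 0) :
    ClosedD (a * a') (b * b') (c * c') (d * d') := by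
  intro u v hu hv
  have key : ‖(c * c' + d * d' * u)‖ < ‖(a * a' + b * b' * u)‖ := by
    apply CLemma (b := c * a' + d * b' * u) (c := a * c' + b * d' * u)
    · intro w hw
      apply le_of_lt
      apply affine_full
      intro z hz
      rcases eq_or_ne z (-1) with hz1 | hz1
      · subst hz1
        have hval := weak_affine hq' (mu_abs hw) (mu_ne hw) u hu
        intro h0
        apply mul_ne_zero he hval
        linear_combination h0 - (a' + c' * w) * hac - ((b' + d' * w) * u) * hbd
      · have hval := prod_affine (weak_affine hq hz hz1)
          (weak_affine hq' (mu_abs hw) (mu_ne hw)) u hu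
        intro h0
        apply hval
        linear_combination h0
    · intro w hw
      apply affine_full
      intro z hz
      rcases eq_or_ne z (-1) with hz1 | hz1
      · subst hz1
        have hval := weak_affine hq (mu_abs hw) (mu_ne hw) u hu
        intro h0
        apply mul_ne_zero he' hval
        linear_combination h0 - (a + c * w) * hac' - ((b + d * w) * u) * hbd'
      · have hval := prod_affine (weak_affine hq (mu_abs hw) (mu_ne hw))
          (weak_affine hq' hz hz1) u hu
        intro h0
        apply hval
        linear_combination h0
  have := affine_ne key v hv
  intro h0
  apply this
  linear_combination h0

noncomputable def qa (A a₁ a₂ r : ℝ) : ℂ := I * A + I * a₁ + I * a₂ - r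
noncomputable def qb (A a₁ a₂ r : ℝ) : ℂ := I * A - I * a₁ + I * a₂ - r
noncomputable def qc (A a₁ a₂ r : ℝ) : ℂ := I * A + I * a₁ - I * a₂ - r
noncomputable def qd (A a₁ a₂ r : ℝ) : ℂ := I * A - I * a₁ - I * a₂ - r

lemma nsq_le_one {u : ℂ} (hu : ‖u‖ ≤ 1) : normSq u ≤ 1 := by
  rw [← Complex.sq_norm]
  nlinarith [norm_nonneg u]

lemma one_add_ne {u : ℂ} (hu : u ≠ -1) : (1 : ℂ) + u ≠ 0 := by
  intro h0
  exact hu (by linear_combination h0)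

lemma root_weak (A a₁ a₂ r : ℝ) (hA : 0 < A) (ha₁ : 0 < a₁) (ha₂ : 0 < a₂) :
    WeakD (qa A a₁ a₂ r) (qb A a₁ a₂ r) (qc A a₁ a₂ r) (qd A a₁ a₂ r) := by
  intro u v hu hv hne
  by_cases hu1 : u = -1
  · subst hu1
    have hv1 : v ≠ -1 := fun h => hne ⟨rfl, h⟩
    have hid : qa A a₁ a₂ r + qb A a₁ a₂ r * (-1) + qc A a₁ a₂ r * v
        + qd A a₁ a₂ r * ((-1) * v) = (2 * I * a₁) * (1 + v) := by
      unfold qa qb qc qd; ring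
    rw [hid]
    exact mul_ne_zero (by
      refine mul_ne_zero (mul_ne_zero two_ne_zero I_ne_zero) ?_
      exact_mod_cast Complex.ofReal_ne_zero.mpr ha₁.ne') (one_add_ne hv1)
  · by_cases hv1 : v = -1
    · subst hv1
      have hid : qa A a₁ a₂ r + qb A a₁ a₂ r * u + qc A a₁ a₂ r * (-1)
          + qd A a₁ a₂ r * (u * (-1)) = (2 * I * a₂) * (1 + u) := by
        unfold qa qb qc qd; ring
      rw [hid]
      exact mul_ne_zero (by
        refine mul_ne_zero (mul_ne_zero two_ne_zero I_ne_zero) ?_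
        exact_mod_cast Complex.ofReal_ne_zero.mpr ha₂.ne') (one_add_ne hu1)
    · intro hE
      set E := qa A a₁ a₂ r + qb A a₁ a₂ r * u + qc A a₁ a₂ r * v
        + qd A a₁ a₂ r * (u * v) with hEdef
      have h1u : (1 : ℂ) + u ≠ 0 := one_add_ne hu1
      have h1v : (1 : ℂ) + v ≠ 0 := one_add_ne hv1
      have him : (E * (starRingEnd ℂ) (1 + u) * (starRingEnd ℂ) (1 + v)).im
          = A * (normSq (1 + u) * normSq (1 + v))
          + a₁ * ((1 - normSq u) * normSq (1 + v))
          + a₂ * ((1 - normSq v) * normSq (1 + u)) := by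
        rw [hEdef]
        unfold qa qb qc qd
        simp only [Complex.mul_im, Complex.mul_re, Complex.add_re, Complex.add_im,
          Complex.sub_re, Complex.sub_im, Complex.conj_re, Complex.conj_im,
          Complex.I_re, Complex.I_im, Complex.ofReal_re, Complex.ofReal_im,
          Complex.one_re, Complex.one_im, Complex.normSq_apply]
        ring
      rw [hE] at him
      simp only [zero_mul, Complex.zero_im] at him
      have p1 : 0 < normSq (1 + u) := Complex.normSq_pos.mpr h1u
      have p2 : 0 < normSq (1 + v) := Complex.normSq_pos.mpr h1v
      have q1 : normSq u ≤ 1 := nsq_le_one hu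
      have q2 : normSq v ≤ 1 := nsq_le_one hv
      have t1 : 0 < A * (normSq (1 + u) * normSq (1 + v)) := mul_pos hA (mul_pos p1 p2)
      have t2 : 0 ≤ a₁ * ((1 - normSq u) * normSq (1 + v)) :=
        mul_nonneg ha₁.le (mul_nonneg (by linarith) p2.le)
      have t3 : 0 ≤ a₂ * ((1 - normSq v) * normSq (1 + u)) :=
        mul_nonneg ha₂.le (mul_nonneg (by linarith) p1.le)
      linarith

lemma two_I_mul_ne {x : ℝ} (hx : 0 < x) : (2 : ℂ) * I * x ≠ 0 := by
  refine mul_ne_zero (mul_ne_zero two_ne_zero I_ne_zero) ?_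
  exact_mod_cast Complex.ofReal_ne_zero.mpr hx.ne'

lemma multiset_closed (A a₁ a₂ : ℝ) (hA : 0 < A) (ha₁ : 0 < a₁) (ha₂ : 0 < a₂)
    (S : Multiset ℝ) (hS : 2 ≤ Multiset.card S) :
    ClosedD ((S.map (qa A a₁ a₂)).prod) ((S.map (qb A a₁ a₂)).prod)
      ((S.map (qc A a₁ a₂)).prod) ((S.map (qd A a₁ a₂)).prod) := by
  induction S using Multiset.induction_on with
  | empty => simp at hS
  | cons r T ih =>
    rcases lt_or_ge (Multiset.card T) 2 with hT | hT
    · have h1 : Multiset.card T = 1 := by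
        simp only [Multiset.card_cons] at hS
        omega
      obtain ⟨r', rfl⟩ := Multiset.card_eq_one.mp h1
      simp only [Multiset.map_cons, Multiset.map_singleton, Multiset.prod_cons,
        Multiset.prod_singleton]
      exact pair_closed (e := 2 * I * a₂) (e' := 2 * I * a₂)
        (root_weak A a₁ a₂ r hA ha₁ ha₂) (root_weak A a₁ a₂ r' hA ha₁ ha₂)
        (by unfold qa qc; ring) (by unfold qb qd; ring)
        (by unfold qa qc; ring) (by unfold qb qd; ring)
        (two_I_mul_ne ha₂) (two_I_mul_ne ha₂)
    · have hC := ih hT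
      simp only [Multiset.map_cons, Multiset.prod_cons]
      exact combine (root_weak A a₁ a₂ r hA ha₁ ha₂) hC

lemma closedD_smul {a b c d k : ℂ} (hk : k ≠ 0) (h : ClosedD a b c d) :
    ClosedD (k * a) (k * b) (k * c) (k * d) := by
  intro u v hu hv h0
  apply mul_ne_zero hk (h u v hu hv)
  linear_combination h0

end P2aux

open P2aux in
theorem P2_key_proposition (G : Polynomial ℝ)
    (hroots : ∀ z : ℂ, (G.map (algebraMap ℝ ℂ)).eval z = 0 → z.im = 0)
    (hdeg : 2 ≤ G.natDegree)
    (A a₁ a₂ : ℝ) (hA : 0 < A) (ha₁ : 0 < a₁) (ha₂ : 0 < a₂)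
    (x₁ x₂ : ℂ)
    (hx : (G.map (algebraMap ℝ ℂ)).eval (I * A - I * a₁ - I * a₂)
        + (G.map (algebraMap ℝ ℂ)).eval (I * A - I * a₁ + I * a₂) * x₂
        + (G.map (algebraMap ℝ ℂ)).eval (I * A + I * a₁ - I * a₂) * x₁
        + (G.map (algebraMap ℝ ℂ)).eval (I * A + I * a₁ + I * a₂) * x₁ * x₂ = 0)
    (hx₁ : 1 ≤ ‖x₁‖) :
    ‖x₂‖ < 1 := by
  by_contra hcon
  push_neg at hcon
  set f : Polynomial ℂ := G.map (algebraMap ℝ ℂ) with hfdef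
  have hf0 : f ≠ 0 := by
    intro h0
    have : G = 0 := by
      have := Polynomial.map_injective (algebraMap ℝ ℂ)
        (algebraMap ℝ ℂ).injective
      exact this (by rw [Polynomial.map_zero, ← hfdef]; exact h0)
    rw [this] at hdeg
    simp at hdeg
  have hsplit : Splits f := IsAlgClosed.splits f
  have hfactor := hsplit.eq_prod_roots
  have heval : ∀ w : ℂ, f.eval w
      = f.leadingCoeff * ((f.roots.map (fun z => w - z)).prod) := by
    intro w
    conv_lhs => rw [hfactor]
    rw [Polynomial.eval_mul, Polynomial.eval_C, Polynomial.eval_multiset_prod,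
      Multiset.map_map]
    congr 2
    apply Multiset.map_congr rfl
    intro z _
    simp
  have hrootsim : ∀ z ∈ f.roots, (z.re : ℂ) = z := by
    intro z hz
    have hiz : z.im = 0 := hroots z ((Polynomial.mem_roots'.mp hz).2)
    exact Complex.ext (by simp) (by simp [hiz])
  set S : Multiset ℝ := f.roots.map Complex.re with hSdef
  have hcard : 2 ≤ Multiset.card S := by
    have h1 : Multiset.card f.roots = f.natDegree :=
      (Polynomial.splits_iff_card_roots.mp hsplit)
    have h2 : f.natDegree = G.natDegree := Polynomial.natDegree_map _
    rw [hSdef, Multiset.card_map, h1, h2]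
    exact hdeg
  have hprod : ∀ (q : ℝ → ℂ) (w : ℂ), (∀ r : ℝ, q r = w - (r : ℂ)) →
      (S.map q).prod = (f.roots.map (fun z => w - z)).prod := by
    intro q w hq
    rw [hSdef, Multiset.map_map]
    apply congrArg
    apply Multiset.map_congr rfl
    intro z hz
    simp only [Function.comp_apply, hq]
    rw [hrootsim z hz]
  have hlc : f.leadingCoeff ≠ 0 := Polynomial.leadingCoeff_ne_zero.mpr hf0
  have hD := closedD_smul hlc (multiset_closed A a₁ a₂ hA ha₁ ha₂ S hcard)
  rw [hprod (qa A a₁ a₂) (I * A + I * a₁ + I * a₂) (fun r => rfl),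
    hprod (qb A a₁ a₂) (I * A - I * a₁ + I * a₂) (fun r => rfl),
    hprod (qc A a₁ a₂) (I * A + I * a₁ - I * a₂) (fun r => rfl),
    hprod (qd A a₁ a₂) (I * A - I * a₁ - I * a₂) (fun r => rfl)] at hD
  rw [← heval, ← heval, ← heval, ← heval] at hD
  have hx1ne : x₁ ≠ 0 := by
    intro h0
    rw [h0] at hx₁
    simp at hx₁
    linarith
  have hx2ne : x₂ ≠ 0 := by
    intro h0
    rw [h0] at hcon
    simp at hcon
    linarith
  have hu : ‖x₁⁻¹‖ ≤ 1 := by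
    rw [norm_inv]
    exact inv_le_one_of_one_le₀ hx₁
  have hv : ‖x₂⁻¹‖ ≤ 1 := by
    rw [norm_inv]
    exact inv_le_one_of_one_le₀ hcon
  apply hD x₁⁻¹ x₂⁻¹ hu hv
  have hmul : (f.eval (I * A + I * a₁ + I * a₂) + f.eval (I * A - I * a₁ + I * a₂) * x₁⁻¹
      + f.eval (I * A + I * a₁ - I * a₂) * x₂⁻¹
      + f.eval (I * A - I * a₁ - I * a₂) * (x₁⁻¹ * x₂⁻¹)) * (x₁ * x₂)
      = (f.eval (I * A - I * a₁ - I * a₂)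
        + f.eval (I * A - I * a₁ + I * a₂) * x₂
        + f.eval (I * A + I * a₁ - I * a₂) * x₁
        + f.eval (I * A + I * a₁ + I * a₂) * x₁ * x₂) := by
    field_simp
    ring
  have := hx
  have hz : (f.eval (I * A + I * a₁ + I * a₂) + f.eval (I * A - I * a₁ + I * a₂) * x₁⁻¹
      + f.eval (I * A + I * a₁ - I * a₂) * x₂⁻¹
      + f.eval (I * A - I * a₁ - I * a₂) * (x₁⁻¹ * x₂⁻¹)) * (x₁ * x₂) = 0 := by
    rw [hmul, this]
  rcases mul_eq_zero.mp hz with h | h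
  · exact h
  · exact absurd h (mul_ne_zero hx1ne hx2ne)
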